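/- Let V be a finite-dimensional real normed space and let v be a smooth point of the unit sphere of V, with support functional σ_v. Then for all x, y ∈ V, lim_{t→+∞} (‖t·v − x‖ − ‖t·v − x − y‖) = σ_v(y); in particular this limit is independent of x, which expresses that the Busemann point of the metric boundary of V determined by the geodesic ray t ↦ t·v is a fixed point for the action of V on the boundary by translations. -/

import Mathlib

open Filter Topology

/-- Proposition 6.3 of Rieffel: if `v` is a smooth point of the unit sphere of a
finite-dimensional real normed space `V`, with (unique) support functional `σ`, then for
all `x, y ∈ V`, `lim_{t→∞} (‖t·v − x‖ − ‖t·v − x − y‖) = σ(y)`; the limit does not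
depend on `x`, so the Busemann point `b_v` is fixed by the translation action of `V` on
the metric boundary. -/
theorem stmt9 {V : Type*} [NormedAddCommGroup V] [NormedSpace ℝ V]
    [FiniteDimensional ℝ V]
    (v : V) (hv : ‖v‖ = 1) (σ : V →L[ℝ] ℝ) (hσnorm : ‖σ‖ = 1) (hσv : σ v = 1)
    (huniq : ∀ τ : V →L[ℝ] ℝ, ‖τ‖ = 1 → τ v = 1 → τ = σ) :
    ∀ x y : V, Filter.Tendsto (fun t : ℝ => ‖t • v - x‖ - ‖t • v - x - y‖)
      Filter.atTop (nhds (σ y)) := by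
  have key : ∀ w : V, Tendsto (fun t : ℝ => ‖t • v - w‖ - t) atTop (𝓝 (-σ w)) := by
    intro w
    set g : ℝ → ℝ := fun t => ‖t • v - w‖ - t with hg
    -- antitone
    have hanti : Antitone g := by
      intro s t hst
      have hdecomp : t • v - w = (t - s) • v + (s • v - w) := by module
      have h1 : ‖t • v - w‖ ≤ (t - s) + ‖s • v - w‖ := by
        rw [hdecomp]
        calc ‖(t - s) • v + (s • v - w)‖ ≤ ‖(t - s) • v‖ + ‖s • v - w‖ := norm_add_le _ _
          _ = (t - s) + ‖s • v - w‖ := by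
            rw [norm_smul, hv, Real.norm_eq_abs, abs_of_nonneg (by linarith), mul_one]
      simp only [hg]
      linarith
    -- lower bound
    have hlb : ∀ t : ℝ, -σ w ≤ g t := by
      intro t
      have h1 : σ (t • v - w) ≤ ‖t • v - w‖ := by
        calc σ (t • v - w) ≤ ‖σ‖ * ‖t • v - w‖ :=
          le_trans (le_abs_self _) (σ.le_opNorm _)
          _ = ‖t • v - w‖ := by rw [hσnorm, one_mul]
      have h2 : σ (t • v - w) = t - σ w := by
        simp [map_sub, map_smul, hσv, smul_eq_mul]
      simp only [hg]
      linarith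
    have hbdd : BddBelow (Set.range g) := ⟨-σ w, by rintro _ ⟨t, rfl⟩; exact hlb t⟩
    have hlim : Tendsto g atTop (𝓝 (⨅ t, g t)) := tendsto_atTop_ciInf hanti hbdd
    -- the sequence of times and support functionals
    set c : ℕ → ℝ := fun n => (n : ℝ) + ‖w‖ + 1 with hc
    have hcpos : ∀ n, 0 < c n := fun n => by
      have : (0:ℝ) ≤ n := Nat.cast_nonneg n
      have : (0:ℝ) ≤ ‖w‖ := norm_nonneg w
      simp only [hc]; positivity
    have hunorm : ∀ n, c n - ‖w‖ ≤ ‖c n • v - w‖ := by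
      intro n
      have := norm_sub_norm_le (c n • v) w
      rwa [norm_smul, Real.norm_eq_abs, abs_of_pos (hcpos n), hv, mul_one] at this
    have hunorm' : ∀ n, ‖c n • v - w‖ ≤ c n + ‖w‖ := by
      intro n
      have := norm_sub_le (c n • v) w
      rwa [norm_smul, Real.norm_eq_abs, abs_of_pos (hcpos n), hv, mul_one] at this
    have hne : ∀ n, c n • v - w ≠ 0 := by
      intro n h
      have h1 := hunorm n
      rw [h, norm_zero] at h1
      have : (0:ℝ) ≤ n := Nat.cast_nonneg n
      simp only [hc] at h1
      linarith
    choose τ hτnorm hτval using fun n => exists_dual_vector ℝ (c n • v - w) (norm_ne_zero_iff.mpr (hne n))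
    -- evaluation of τ n at v tends to 1
    have hτv_le : ∀ n, τ n v ≤ 1 := by
      intro n
      calc τ n v ≤ ‖τ n‖ * ‖v‖ := le_trans (le_abs_self _) ((τ n).le_opNorm v)
        _ = 1 := by rw [hτnorm n, hv, mul_one]
    have hτw : ∀ n, |τ n w| ≤ ‖w‖ := by
      intro n
      calc |τ n w| ≤ ‖τ n‖ * ‖w‖ := (τ n).le_opNorm w
        _ = ‖w‖ := by rw [hτnorm n, one_mul]
    have hτveq : ∀ n, τ n v = (‖c n • v - w‖ + τ n w) / c n := by
      intro n
      have h1 : τ n (c n • v - w) = c n * τ n v - τ n w := by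
        simp [map_sub, map_smul, smul_eq_mul]
      have h2 : (τ n) (c n • v - w) = ‖c n • v - w‖ := hτval n
      rw [eq_div_iff (hcpos n).ne']
      linarith [h1, h2]
    have hτv_tendsto : Tendsto (fun n => τ n v) atTop (𝓝 1) := by
      have hsq : ∀ n : ℕ, |τ n v - 1| ≤ 2 * ‖w‖ / ((n : ℝ) + 1) := by
        intro n
        have hc0 := hcpos n
        have h1 : τ n v - 1 = (‖c n • v - w‖ + τ n w - c n) / c n := by
          rw [hτveq n]; field_simp
        rw [h1, abs_div, abs_of_pos hc0]
        have hnum : |‖c n • v - w‖ + τ n w - c n| ≤ 2 * ‖w‖ := by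
          have h2 := hunorm n
          have h3 := hunorm' n
          have h4 := abs_le.mp (hτw n)
          rw [abs_le]; constructor <;> linarith [h4.1, h4.2]
        have hcn : (n : ℝ) + 1 ≤ c n := by
          simp only [hc]; linarith [norm_nonneg w]
        exact div_le_div₀ (by positivity) hnum (by positivity) hcn
      have hz : Tendsto (fun n : ℕ => 2 * ‖w‖ / ((n : ℝ) + 1)) atTop (𝓝 0) := by
        apply Tendsto.div_atTop tendsto_const_nhds
        exact tendsto_atTop_add_const_right _ _ tendsto_natCast_atTop_atTop
      have : Tendsto (fun n => τ n v - 1) atTop (𝓝 0) := by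
        apply squeeze_zero_norm _ hz
        intro n; simpa using hsq n
      have := this.add_const 1
      simpa using this
    -- compactness: extract convergent subsequence
    have hcompact : IsCompact (Metric.closedBall (0 : V →L[ℝ] ℝ) 1) :=
      isCompact_closedBall _ _
    have hmemall : ∀ n, τ n ∈ Metric.closedBall (0 : V →L[ℝ] ℝ) 1 := by
      intro n; rw [Metric.mem_closedBall, dist_zero_right, hτnorm n]
    obtain ⟨τlim, hmem, φ, hφmono, hconv⟩ := hcompact.tendsto_subseq hmemall
    have happ : Tendsto (fun n => τ (φ n) v) atTop (𝓝 (τlim v)) :=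
      ((ContinuousLinearMap.apply ℝ ℝ v).continuous.tendsto τlim).comp hconv
    have hτlimv : τlim v = 1 :=
      tendsto_nhds_unique happ (hτv_tendsto.comp hφmono.tendsto_atTop)
    have hτlimnorm : ‖τlim‖ = 1 := by
      apply le_antisymm
      · rw [Metric.mem_closedBall, dist_zero_right] at hmem; exact hmem
      · have := le_trans (le_abs_self _) (τlim.le_opNorm v)
        rw [hτlimv, hv, mul_one] at this
        exact this
    have hτlimσ : τlim = σ := huniq τlim hτlimnorm hτlimv
    -- the infimum is ≤ -σ w
    have hub : ∀ n, (⨅ t, g t) ≤ -τ n w := by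
      intro n
      have h1 : g (c n) ≤ -τ n w := by
        have h3 : τ n (c n • v - w) = c n * τ n v - τ n w := by
          simp [map_sub, map_smul, smul_eq_mul]
        have h2 : ‖c n • v - w‖ = c n * τ n v - τ n w := by
          rw [← h3]; exact_mod_cast (hτval n).symm
        have h3 : c n * τ n v ≤ c n := by
          have := hτv_le n
          nlinarith [hcpos n]
        simp only [hg]
        linarith
      exact le_trans (ciInf_le hbdd (c n)) h1
    have hwlim : Tendsto (fun n => -τ (φ n) w) atTop (𝓝 (-σ w)) := by
      have : Tendsto (fun n => τ (φ n) w) atTop (𝓝 (τlim w)) :=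
        ((ContinuousLinearMap.apply ℝ ℝ w).continuous.tendsto τlim).comp hconv
      rw [hτlimσ] at this
      exact this.neg
    have hle : (⨅ t, g t) ≤ -σ w := ge_of_tendsto' hwlim (fun n => hub (φ n))
    have heq : (⨅ t, g t) = -σ w := le_antisymm hle (le_ciInf hlb)
    rwa [heq] at hlim
  intro x y
  have hx := key x
  have hxy := key (x + y)
  have h := hx.sub hxy
  have heq : -σ x - -σ (x + y) = σ y := by rw [map_add]; ring
  rw [heq] at h
  apply h.congr
  intro t
  rw [sub_sub (t • v) x y]
  ring
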